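/- arXiv:1103.4014 — 2 statements merged into one kernel-verified Lean document; each statement's English description precedes it below -/
import Mathlib

section
/- If T satisfies T''(x) + (2(2a-1)x/(1-x^2)) T'(x) + ((k+1)(2a+k)/(1-x^2)) T(x) = 0 on (-1,1) with a ≥ 1/2 and k ≥ 0, then the function S(x) = T(x)^2 + (1-x^2) T'(x)^2 / ((k+1)(2a+k)) attains its maximum on (-1,1) at x = 0; in particular S(x) ≤ S(0) for all x in (-1,1). -/
open Set

/-- **Maximum of the Sonine function at the origin.**
If `T'' + (2(2a-1)x/(1-x²)) T' + ((k+1)(2a+k)/(1-x²)) T = 0` on `(-1,1)` with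
`a ≥ 1/2` and `k ≥ 0`, then
`S x = T x ^ 2 + (1-x²) (T' x)² / ((k+1)(2a+k))` attains its maximum on `(-1,1)`
at `x = 0`: `S x ≤ S 0` for all `x ∈ (-1,1)`. -/
theorem sonine_max_at_zero (a : ℝ) (ha : 1 / 2 ≤ a) (k : ℕ)
    (hpos : 0 < ((k : ℝ) + 1) * (2 * a + k))
    (T T' T'' : ℝ → ℝ)
    (hT : ∀ x ∈ Ioo (-1 : ℝ) 1, HasDerivAt T (T' x) x)
    (hT' : ∀ x ∈ Ioo (-1 : ℝ) 1, HasDerivAt T' (T'' x) x)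
    (hode : ∀ x ∈ Ioo (-1 : ℝ) 1,
      T'' x + (2 * (2 * a - 1) * x / (1 - x ^ 2)) * T' x
        + (((k : ℝ) + 1) * (2 * a + k) / (1 - x ^ 2)) * T x = 0) :
    ∀ x ∈ Ioo (-1 : ℝ) 1,
      T x ^ 2 + (1 - x ^ 2) * (T' x) ^ 2 / (((k : ℝ) + 1) * (2 * a + k))
        ≤ T 0 ^ 2 + (1 - (0 : ℝ) ^ 2) * (T' 0) ^ 2 / (((k : ℝ) + 1) * (2 * a + k)) := by
  intro x hx
  set c : ℝ := ((k : ℝ) + 1) * (2 * a + k) with hc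
  have hc0 : c ≠ 0 := ne_of_gt hpos
  set S : ℝ → ℝ := fun y => T y ^ 2 + (1 - y ^ 2) * (T' y) ^ 2 / c with hSdef
  have hSd : ∀ y ∈ Ioo (-1 : ℝ) 1,
      HasDerivAt S (-(2 * (4 * a - 1) / c) * (y * T' y ^ 2)) y := by
    intro y hy
    have hy2 : (1 : ℝ) - y ^ 2 ≠ 0 := by nlinarith [hy.1, hy.2]
    have key : (1 - y ^ 2) * T'' y = -(2 * (2 * a - 1) * y) * T' y - c * T y := by
      have ep := hode y hy
      field_simp at ep
      linarith
    have h1 : HasDerivAt (fun z => T z ^ 2) (2 * T y ^ 1 * T' y) y := (hT y hy).pow 2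
    have hg : HasDerivAt (fun z : ℝ => 1 - z ^ 2) (-(2 * y ^ 1)) y := by
      simpa using ((hasDerivAt_pow 2 y).const_sub 1)
    have hh : HasDerivAt (fun z => T' z ^ 2) (2 * T' y ^ 1 * T'' y) y := (hT' y hy).pow 2
    have h2 := (hg.mul hh).div_const c
    have := h1.add h2
    convert this using 1
    · rfl
    · rfl
    · rfl
    have e2 : T'' y = (-(2 * (2 * a - 1) * y) * T' y - c * T y) / (1 - y ^ 2) := by
      field_simp
      linarith [key]
    rw [e2]
    field_simp
    ring
  have hcont : ContinuousOn S (Ioo (-1 : ℝ) 1) := fun y hy =>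
    (hSd y hy).continuousAt.continuousWithinAt
  have hx0 : (0 : ℝ) ∈ Ioo (-1 : ℝ) 1 := by norm_num
  have goal : S x ≤ S 0 := by
    rcases le_total x 0 with hle | hle
    · have hsub : Ioc (-1 : ℝ) 0 ⊆ Ioo (-1 : ℝ) 1 := fun y hy =>
        ⟨hy.1, lt_of_le_of_lt hy.2 one_pos⟩
      have hint : interior (Ioc (-1 : ℝ) 0) = Ioo (-1 : ℝ) 0 := interior_Ioc
      have hmono : MonotoneOn S (Ioc (-1 : ℝ) 0) := by
        apply monotoneOn_of_deriv_nonneg (convex_Ioc _ _) (hcont.mono hsub)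
        · intro y hy
          rw [hint] at hy
          exact ((hSd y (hsub (Ioo_subset_Ioc_self hy))).differentiableAt.differentiableWithinAt)
        · intro y hy
          rw [hint] at hy
          have hmem := hsub (Ioo_subset_Ioc_self hy)
          rw [(hSd y hmem).deriv]
          have h1 : (0 : ℝ) ≤ 2 * (4 * a - 1) / c := by
            apply div_nonneg _ (le_of_lt hpos)
            linarith
          have h2 : y * T' y ^ 2 ≤ 0 :=
            mul_nonpos_of_nonpos_of_nonneg (le_of_lt hy.2) (sq_nonneg _)
          nlinarith
      exact hmono ⟨hx.1, hle⟩ ⟨by norm_num, le_refl 0⟩ hle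
    · have hsub : Ico (0 : ℝ) 1 ⊆ Ioo (-1 : ℝ) 1 := fun y hy =>
        ⟨lt_of_lt_of_le (by norm_num) hy.1, hy.2⟩
      have hint : interior (Ico (0 : ℝ) 1) = Ioo (0 : ℝ) 1 := interior_Ico
      have hanti : AntitoneOn S (Ico (0 : ℝ) 1) := by
        apply antitoneOn_of_deriv_nonpos (convex_Ico _ _) (hcont.mono hsub)
        · intro y hy
          rw [hint] at hy
          exact ((hSd y (hsub (Ioo_subset_Ico_self hy))).differentiableAt.differentiableWithinAt)
        · intro y hy
          rw [hint] at hy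
          have hmem := hsub (Ioo_subset_Ico_self hy)
          rw [(hSd y hmem).deriv]
          have h1 : (0 : ℝ) ≤ 2 * (4 * a - 1) / c := by
            apply div_nonneg _ (le_of_lt hpos)
            linarith
          have h2 : 0 ≤ y * T' y ^ 2 :=
            mul_nonneg (le_of_lt hy.1) (sq_nonneg _)
          nlinarith
      exact hanti ⟨le_refl 0, by norm_num⟩ ⟨hle, hx.2⟩ hle
  simpa [hSdef] using goal
end

section
/- Let n ≥ 4 and define Q_k(x) = ∂_x^k((1-x^2)^{k+(n-3)/2}) / (2^k Γ(k+(n-1)/2)) for integer k ≥ 1. Then there is a constant C (independent of k and x) such that |Q_k(x)| ≤ C k^{1-n/2} for all x in [-1,1]. -/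
open Set
open scoped ContDiff


noncomputable def qf (c : ℝ) : ℝ → ℝ := fun y => (1 - y ^ 2) ^ c

lemma qf_hasDerivAt {c : ℝ} (hc : 1 ≤ c) (x : ℝ) :
    HasDerivAt (qf c) ((-2 * x) * c * (1 - x ^ 2) ^ (c - 1)) x := by
  have h1 : HasDerivAt (fun y : ℝ => 1 - y ^ 2) (-2 * x) x := by
    simpa using ((hasDerivAt_pow 2 x).const_sub 1)
  exact h1.rpow_const (Or.inr hc)

lemma qf_smooth {c : ℝ} : ContDiffOn ℝ ∞ (qf c) (Ioo (-1 : ℝ) 1) := by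
  intro x hx
  have hne : (1 - x ^ 2) ≠ 0 := by nlinarith [hx.1, hx.2]
  have h1 : ContDiffAt ℝ ∞ (fun y : ℝ => 1 - y ^ 2) x :=
    (contDiff_const.sub (contDiff_id.pow 2)).contDiffAt
  exact (h1.rpow_const_of_ne hne).contDiffWithinAt

lemma qf_smoothD {c : ℝ} (j : ℕ) :
    ContDiffOn ℝ ∞ (iteratedDeriv j (qf c)) (Ioo (-1 : ℝ) 1) := by
  induction j with
  | zero => simpa [iteratedDeriv_zero] using qf_smooth (c := c)
  | succ j ih =>
    rw [iteratedDeriv_succ]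
    exact ((contDiffOn_infty_iff_deriv_of_isOpen isOpen_Ioo).1 ih).2

lemma qf_hasDerivAt_D {c : ℝ} (j : ℕ) {x : ℝ} (hx : x ∈ Ioo (-1 : ℝ) 1) :
    HasDerivAt (iteratedDeriv j (qf c)) (iteratedDeriv (j + 1) (qf c) x) x := by
  have h := ((contDiffOn_infty_iff_deriv_of_isOpen isOpen_Ioo).1 (qf_smoothD (c := c) j)).1
  have hd : DifferentiableAt ℝ (iteratedDeriv j (qf c)) x :=
    h.differentiableAt (isOpen_Ioo.mem_nhds hx)
  rw [iteratedDeriv_succ]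
  exact hd.hasDerivAt





lemma deriv_zero_of_eqOn {g : ℝ → ℝ} {d x : ℝ} (hx : x ∈ Ioo (-1 : ℝ) 1)
    (h0 : ∀ y ∈ Ioo (-1 : ℝ) 1, g y = 0) (hg : HasDerivAt g d x) : d = 0 := by
  have he : g =ᶠ[nhds x] (fun _ => (0 : ℝ)) :=
    Filter.eventuallyEq_of_mem (isOpen_Ioo.mem_nhds hx) h0
  rw [← hg.deriv, he.deriv_eq, deriv_const]

lemma qf_base {c : ℝ} (hc : 1 ≤ c) {x : ℝ} (hx : x ∈ Ioo (-1 : ℝ) 1) :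
    (1 - x ^ 2) * iteratedDeriv 1 (qf c) x + 2 * c * x * iteratedDeriv 0 (qf c) x = 0 := by
  have hne : (1 - x ^ 2) ≠ 0 := by nlinarith [hx.1, hx.2]
  have h1 : iteratedDeriv 1 (qf c) x = (-2 * x) * c * (1 - x ^ 2) ^ (c - 1) := by
    rw [iteratedDeriv_one]; exact (qf_hasDerivAt hc x).deriv
  have h2 : (1 - x ^ 2) ^ c = (1 - x ^ 2) ^ (c - 1) * (1 - x ^ 2) := by
    rw [← Real.rpow_add_one hne]; ring_nf
  rw [h1, iteratedDeriv_zero]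
  show (1 - x ^ 2) * _ + 2 * c * x * (1 - x ^ 2) ^ c = 0
  rw [h2]; ring

lemma qf_ode {c : ℝ} (hc : 1 ≤ c) (m : ℕ) : ∀ x ∈ Ioo (-1 : ℝ) 1,
    (1 - x ^ 2) * iteratedDeriv (m + 2) (qf c) x
      + 2 * (c - ((m : ℝ) + 1)) * x * iteratedDeriv (m + 1) (qf c) x
      + ((m : ℝ) + 1) * (2 * c - (m : ℝ)) * iteratedDeriv m (qf c) x = 0 := by
  induction m with
  | zero =>
    intro x hx
    have h1y : HasDerivAt (fun y : ℝ => 1 - y ^ 2) (-2 * x) x := by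
      simpa using ((hasDerivAt_pow 2 x).const_sub 1)
    have hlin : HasDerivAt (fun y : ℝ => 2 * c * y) (2 * c) x := by
      simpa using (hasDerivAt_id x).const_mul (2 * c)
    have hg : HasDerivAt
        (fun y => (1 - y ^ 2) * iteratedDeriv 1 (qf c) y + 2 * c * y * iteratedDeriv 0 (qf c) y)
        (((-2 * x) * iteratedDeriv 1 (qf c) x + (1 - x ^ 2) * iteratedDeriv 2 (qf c) x)
          + (2 * c * iteratedDeriv 0 (qf c) x + 2 * c * x * iteratedDeriv 1 (qf c) x)) x :=
      (h1y.mul (qf_hasDerivAt_D 1 hx)).add (hlin.mul (qf_hasDerivAt_D 0 hx))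
    have h0 := deriv_zero_of_eqOn hx (fun y hy => qf_base hc hy) hg
    push_cast
    linear_combination h0
  | succ m ih =>
    intro x hx
    have h1y : HasDerivAt (fun y : ℝ => 1 - y ^ 2) (-2 * x) x := by
      simpa using ((hasDerivAt_pow 2 x).const_sub 1)
    have hlin : HasDerivAt (fun y : ℝ => 2 * (c - ((m : ℝ) + 1)) * y) (2 * (c - ((m : ℝ) + 1))) x := by
      simpa using (hasDerivAt_id x).const_mul (2 * (c - ((m : ℝ) + 1)))
    have hg : HasDerivAt
        (fun y => (1 - y ^ 2) * iteratedDeriv (m + 2) (qf c) y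
          + 2 * (c - ((m : ℝ) + 1)) * y * iteratedDeriv (m + 1) (qf c) y
          + ((m : ℝ) + 1) * (2 * c - (m : ℝ)) * iteratedDeriv m (qf c) y)
        ((((-2 * x) * iteratedDeriv (m + 2) (qf c) x
            + (1 - x ^ 2) * iteratedDeriv (m + 3) (qf c) x)
          + (2 * (c - ((m : ℝ) + 1)) * iteratedDeriv (m + 1) (qf c) x
            + 2 * (c - ((m : ℝ) + 1)) * x * iteratedDeriv (m + 2) (qf c) x))
          + ((m : ℝ) + 1) * (2 * c - (m : ℝ)) * iteratedDeriv (m + 1) (qf c) x) x :=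
      ((h1y.mul (qf_hasDerivAt_D (m + 2) hx)).add (hlin.mul (qf_hasDerivAt_D (m + 1) hx))).add
        ((qf_hasDerivAt_D m hx).const_mul (((m : ℝ) + 1) * (2 * c - (m : ℝ))))
    have h0 := deriv_zero_of_eqOn hx ih hg
    push_cast
    linear_combination h0





lemma qf_sonine {c : ℝ} (k : ℕ) (hc : 1 ≤ c) (h2 : (k : ℝ) + 1 / 2 ≤ c)
    {x : ℝ} (hx : x ∈ Ioo (-1 : ℝ) 1) :
    (iteratedDeriv k (qf c) x) ^ 2 ≤ (iteratedDeriv k (qf c) 0) ^ 2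
      + (iteratedDeriv (k + 1) (qf c) 0) ^ 2 / (((k : ℝ) + 1) * (2 * c - (k : ℝ))) := by
  set lam : ℝ := ((k : ℝ) + 1) * (2 * c - (k : ℝ)) with hlam
  clear_value lam
  have hlampos : 0 < lam := by
    have : (k : ℝ) + 1 ≤ 2 * c - (k : ℝ) := by linarith
    have h1 : (0 : ℝ) < (k : ℝ) + 1 := by positivity
    rw [hlam]; exact mul_pos h1 (lt_of_lt_of_le h1 this)
  set S : ℝ → ℝ := fun y => (iteratedDeriv k (qf c) y) ^ 2 + (1 - y ^ 2) * (iteratedDeriv (k + 1) (qf c) y) ^ 2 / lam with hS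
  -- derivative of S
  have hSder : ∀ y ∈ Ioo (-1 : ℝ) 1, HasDerivAt S
      (-2 * (2 * c - 2 * (k : ℝ) - 1) * y * (iteratedDeriv (k + 1) (qf c) y) ^ 2 / lam) y := by
    intro y hy
    have h1y : HasDerivAt (fun t : ℝ => 1 - t ^ 2) (-2 * y) y := by
      simpa using ((hasDerivAt_pow 2 y).const_sub 1)
    have hA : HasDerivAt (fun t => (iteratedDeriv k (qf c) t) ^ 2) (2 * iteratedDeriv k (qf c) y ^ 1 * iteratedDeriv (k + 1) (qf c) y) y :=
      (qf_hasDerivAt_D k hy).pow 2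
    have hB : HasDerivAt (fun t => (1 - t ^ 2) * (iteratedDeriv (k + 1) (qf c) t) ^ 2 / lam)
        (((-2 * y) * (iteratedDeriv (k + 1) (qf c) y) ^ 2
          + (1 - y ^ 2) * (2 * iteratedDeriv (k + 1) (qf c) y ^ 1 * iteratedDeriv (k + 2) (qf c) y)) / lam) y :=
      (h1y.mul ((qf_hasDerivAt_D (k + 1) hy).pow 2)).div_const lam
    have hode : (1 - y ^ 2) * iteratedDeriv (k + 2) (qf c) y + 2 * (c - ((k : ℝ) + 1)) * y * iteratedDeriv (k + 1) (qf c) y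
        + lam * iteratedDeriv k (qf c) y = 0 := by
      simpa [hlam] using qf_ode hc k y hy
    have hcomb : HasDerivAt S _ y := hA.add hB
    convert hcomb using 1
    have hlamne : lam ≠ 0 := ne_of_gt hlampos
    rw [div_eq_iff hlamne, add_mul, div_mul_cancel₀ _ hlamne]
    linear_combination (-2 * iteratedDeriv (k + 1) (qf c) y) * hode
  -- monotonicity
  have key : S x ≤ S 0 := by
    rcases le_or_gt 0 x with hx0 | hx0
    · rcases eq_or_lt_of_le hx0 with h | h
      · rw [← h]
      · have hsub : Icc (0 : ℝ) x ⊆ Ioo (-1 : ℝ) 1 := fun y hy =>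
          ⟨by linarith [hy.1], lt_of_le_of_lt hy.2 hx.2⟩
        have hmono : AntitoneOn S (Icc (0 : ℝ) x) := by
          apply antitoneOn_of_deriv_nonpos (convex_Icc 0 x)
          · exact fun y hy => ((hSder y (hsub hy)).continuousAt).continuousWithinAt
          · intro y hy
            rw [interior_Icc] at hy
            exact (hSder y (hsub (Ioo_subset_Icc_self hy))).differentiableAt.differentiableWithinAt
          · intro y hy
            rw [interior_Icc] at hy
            rw [(hSder y (hsub (Ioo_subset_Icc_self hy))).deriv]
            have hnum : 0 ≤ 2 * (2 * c - 2 * (k : ℝ) - 1) * y * (iteratedDeriv (k + 1) (qf c) y) ^ 2 := by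
              have : 0 ≤ 2 * c - 2 * (k : ℝ) - 1 := by linarith
              have hy0 : 0 ≤ y := le_of_lt hy.1
              positivity
            have : -2 * (2 * c - 2 * (k : ℝ) - 1) * y * (iteratedDeriv (k + 1) (qf c) y) ^ 2 ≤ 0 := by linarith
            exact div_nonpos_of_nonpos_of_nonneg this (le_of_lt hlampos)
        exact hmono (left_mem_Icc.2 hx0) (right_mem_Icc.2 hx0) hx0
    · have hsub : Icc x (0 : ℝ) ⊆ Ioo (-1 : ℝ) 1 := fun y hy =>
        ⟨lt_of_lt_of_le hx.1 hy.1, by linarith [hy.2]⟩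
      have hmono : MonotoneOn S (Icc x (0 : ℝ)) := by
        apply monotoneOn_of_deriv_nonneg (convex_Icc x 0)
        · exact fun y hy => ((hSder y (hsub hy)).continuousAt).continuousWithinAt
        · intro y hy
          rw [interior_Icc] at hy
          exact (hSder y (hsub (Ioo_subset_Icc_self hy))).differentiableAt.differentiableWithinAt
        · intro y hy
          rw [interior_Icc] at hy
          rw [(hSder y (hsub (Ioo_subset_Icc_self hy))).deriv]
          have hnum : 0 ≤ 2 * (2 * c - 2 * (k : ℝ) - 1) * (-y) * (iteratedDeriv (k + 1) (qf c) y) ^ 2 := by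
            have : 0 ≤ 2 * c - 2 * (k : ℝ) - 1 := by linarith
            have hy0 : 0 ≤ -y := by linarith [hy.2]
            positivity
          have : 0 ≤ -2 * (2 * c - 2 * (k : ℝ) - 1) * y * (iteratedDeriv (k + 1) (qf c) y) ^ 2 := by linarith
          exact div_nonneg this (le_of_lt hlampos)
      exact hmono (left_mem_Icc.2 (le_of_lt hx0)) (right_mem_Icc.2 (le_of_lt hx0)) (le_of_lt hx0)
  have h1 : (iteratedDeriv k (qf c) x) ^ 2 ≤ S x := by
    have hpos : 0 ≤ (1 - x ^ 2) * (iteratedDeriv (k + 1) (qf c) x) ^ 2 / lam := by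
      have h12 : (0:ℝ) ≤ 1 - x ^ 2 := by nlinarith [hx.1, hx.2]
      positivity
    simp only [hS]
    linarith
  have h2' : S 0 = (iteratedDeriv k (qf c) 0) ^ 2 + (iteratedDeriv (k + 1) (qf c) 0) ^ 2 / lam := by
    simp [hS]
  calc (iteratedDeriv k (qf c) x) ^ 2 ≤ S x := h1
    _ ≤ S 0 := key
    _ = _ := h2'





lemma qf_zero_mem : (0 : ℝ) ∈ Ioo (-1 : ℝ) 1 := by norm_num

lemma qf_rec0 {c : ℝ} (hc : 1 ≤ c) (m : ℕ) :
    iteratedDeriv (m + 2) (qf c) 0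
      = -(((m : ℝ) + 1) * (2 * c - (m : ℝ))) * iteratedDeriv m (qf c) 0 := by
  have h := qf_ode hc m 0 qf_zero_mem
  simp only [mul_zero, zero_mul] at h
  linarith [h]

lemma qf_D0 {c : ℝ} : iteratedDeriv 0 (qf c) 0 = 1 := by
  simp [iteratedDeriv_zero, qf, Real.one_rpow]

lemma qf_D1 {c : ℝ} (hc : 1 ≤ c) : iteratedDeriv 1 (qf c) 0 = 0 := by
  rw [iteratedDeriv_one, (qf_hasDerivAt hc 0).deriv]
  ring

lemma qf_odd0 {c : ℝ} (hc : 1 ≤ c) : ∀ j : ℕ, iteratedDeriv (2 * j + 1) (qf c) 0 = 0 := by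
  intro j
  induction j with
  | zero => simpa using qf_D1 hc
  | succ j ih =>
    have : 2 * (j + 1) + 1 = (2 * j + 1) + 2 := by ring
    rw [this, qf_rec0 hc, ih, mul_zero]

lemma qf_even0 {c : ℝ} (hc : 1 ≤ c) : ∀ j : ℕ, iteratedDeriv (2 * j) (qf c) 0
    = (-1) ^ j * (((2 * j).factorial : ℝ) / (j.factorial : ℝ))
      * ∏ i ∈ Finset.range j, (c - (i : ℝ)) := by
  intro j
  induction j with
  | zero => simpa using qf_D0
  | succ j ih =>
    have hidx : 2 * (j + 1) = (2 * j) + 2 := by ring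
    rw [hidx, qf_rec0 hc, ih, Finset.prod_range_succ]
    have hfac2 : (((2 * j + 2).factorial : ℕ) : ℝ)
        = ((2 * (j : ℝ) + 2) * (2 * (j : ℝ) + 1)) * ((2 * j).factorial : ℝ) := by
      rw [show 2 * j + 2 = (2 * j + 1) + 1 from rfl, Nat.factorial_succ, Nat.factorial_succ]
      push_cast; ring
    have hfac1 : (((j + 1).factorial : ℕ) : ℝ) = ((j : ℝ) + 1) * (j.factorial : ℝ) := by
      rw [Nat.factorial_succ]; push_cast; ring
    rw [hfac2, hfac1]
    have h1 : ((j.factorial : ℕ) : ℝ) ≠ 0 := Nat.cast_ne_zero.2 j.factorial_ne_zero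
    have h2 : ((j : ℝ) + 1) ≠ 0 := by positivity
    field_simp
    push_cast
    ring

-- log-convexity: Γ(x+s) ≤ Γ(x) * x^s for 0 < x, s ∈ [0,1]
lemma gamma_interp {x s : ℝ} (hx : 0 < x) (hs0 : 0 ≤ s) (hs1 : s ≤ 1) :
    Real.Gamma (x + s) ≤ Real.Gamma x * x ^ s := by
  have hc := Real.convexOn_log_Gamma.2 (mem_Ioi.2 hx) (mem_Ioi.2 (by linarith : (0:ℝ) < x + 1))
    (by linarith : 0 ≤ 1 - s) hs0 (by ring)
  simp only [smul_eq_mul, Function.comp_apply] at hc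
  have hxs : (1 - s) * x + s * (x + 1) = x + s := by ring
  rw [hxs] at hc
  have hg1 : Real.Gamma (x + 1) = x * Real.Gamma x := Real.Gamma_add_one (ne_of_gt hx)
  have hgpos : 0 < Real.Gamma x := Real.Gamma_pos_of_pos hx
  have hgspos : 0 < Real.Gamma (x + s) := Real.Gamma_pos_of_pos (by linarith)
  rw [hg1, Real.log_mul (ne_of_gt hx) (ne_of_gt hgpos)] at hc
  have hc2 : Real.log (Real.Gamma (x + s)) ≤ Real.log (Real.Gamma x) + s * Real.log x := by
    linarith
  have := Real.exp_le_exp.2 hc2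
  rw [Real.exp_log hgspos, Real.exp_add, Real.exp_log hgpos] at this
  calc Real.Gamma (x + s) ≤ Real.Gamma x * Real.exp (s * Real.log x) := this
    _ = Real.Gamma x * x ^ s := by
        rw [Real.rpow_def_of_pos hx, mul_comm s]

lemma gamma_peel_nat {y : ℝ} (hy : 0 < y) : ∀ (b : ℝ), y ≤ b → ∀ q : ℕ,
    Real.Gamma b * y ^ q ≤ Real.Gamma (b + q) := by
  intro b hb q
  induction q with
  | zero => simp
  | succ q ih =>
    have hbq : (0 : ℝ) < b + q := by
      have : (0:ℝ) ≤ (q:ℝ) := Nat.cast_nonneg q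
      linarith
    have h1 : Real.Gamma (b + (q + 1 : ℕ)) = (b + q) * Real.Gamma (b + q) := by
      push_cast
      rw [show b + ((q : ℝ) + 1) = (b + q) + 1 by ring, Real.Gamma_add_one (ne_of_gt hbq)]
    rw [h1, pow_succ]
    have hpos : 0 < Real.Gamma (b + q) := Real.Gamma_pos_of_pos hbq
    calc Real.Gamma b * (y ^ q * y) = (Real.Gamma b * y ^ q) * y := by ring
      _ ≤ Real.Gamma (b + q) * y := mul_le_mul_of_nonneg_right ih (le_of_lt hy)
      _ ≤ (b + q) * Real.Gamma (b + q) := by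
          have : (0:ℝ) ≤ (q:ℝ) := Nat.cast_nonneg q
          nlinarith [hpos]

-- Gautschi-type bound
lemma gamma_ratio {y δ : ℝ} (hy : 1 / 2 ≤ y) (hδ : 1 ≤ δ) :
    Real.Gamma y * y ^ δ ≤ 3 * Real.Gamma (y + δ) := by
  have hy0 : 0 < y := by linarith
  set p : ℕ := ⌊δ⌋₊ with hp
  set s : ℝ := δ - p with hs
  have hp1 : 1 ≤ p := Nat.le_floor (by exact_mod_cast hδ)
  have hs0 : 0 ≤ s := by
    have := Nat.floor_le (by linarith : (0:ℝ) ≤ δ)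
    simp only [hs]; linarith
  have hs1 : s < 1 := by
    have := Nat.lt_floor_add_one δ
    simp only [hs]; linarith
  -- step B : y * Γ y ≤ Γ (y+s) * (y+s)^(1-s)
  have hB : y * Real.Gamma y ≤ Real.Gamma (y + s) * (y + s) ^ (1 - s) := by
    have := gamma_interp (x := y + s) (s := 1 - s) (by linarith) (by linarith) (by linarith)
    rw [show y + s + (1 - s) = y + 1 by ring, Real.Gamma_add_one (ne_of_gt hy0)] at this
    exact this
  -- step A : Γ (y+s) * y ^ p ≤ Γ (y + δ)
  have hA : Real.Gamma (y + s) * y ^ p ≤ Real.Gamma (y + δ) := by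
    have := gamma_peel_nat hy0 (y + s) (by linarith) p
    rwa [show y + s + (p : ℝ) = y + δ by rw [hs]; ring] at this
  -- (y+s)^(1-s) ≤ 3 * y^(1-s)
  have h3 : (y + s) ^ (1 - s) ≤ 3 * y ^ (1 - s) := by
    have e1 : (y + s) ^ (1 - s) ≤ (3 * y) ^ (1 - s) :=
      Real.rpow_le_rpow (by linarith) (by linarith) (by linarith)
    have e2 : ((3 : ℝ) * y) ^ (1 - s) = 3 ^ (1 - s) * y ^ (1 - s) :=
      Real.mul_rpow (by norm_num) (le_of_lt hy0)
    have e3 : (3 : ℝ) ^ (1 - s) ≤ 3 ^ (1 : ℝ) :=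
      Real.rpow_le_rpow_of_exponent_le (by norm_num) (by linarith)
    have e4 : (0:ℝ) ≤ y ^ (1 - s) := Real.rpow_nonneg (le_of_lt hy0) _
    calc (y + s) ^ (1 - s) ≤ 3 ^ (1 - s) * y ^ (1 - s) := by rw [← e2]; exact e1
      _ ≤ 3 * y ^ (1 - s) := by
          rw [show ((3:ℝ) ^ (1:ℝ)) = 3 by norm_num] at e3
          exact mul_le_mul_of_nonneg_right e3 e4
  -- combine
  have hyδ : y ^ δ = y ^ (p : ℝ) * y ^ s := by
    rw [← Real.rpow_add hy0]
    congr 1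
    rw [hs]; ring
  have hyp : y ^ (p : ℝ) = y ^ p := Real.rpow_natCast y p
  have hys : y ^ (1 - s) * y ^ s = y := by
    rw [← Real.rpow_add hy0]; simp
  have hGspos : 0 < Real.Gamma (y + s) := Real.Gamma_pos_of_pos (by linarith)
  have hGpos : 0 < Real.Gamma y := Real.Gamma_pos_of_pos hy0
  have hpowpos : 0 < y ^ (p:ℕ) := pow_pos hy0 p
  have hspow : 0 < y ^ s := Real.rpow_pos_of_pos hy0 s
  have key : y * (Real.Gamma y * y ^ δ) ≤ y * (3 * Real.Gamma (y + δ)) := by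
    calc y * (Real.Gamma y * y ^ δ)
        = (y * Real.Gamma y) * (y ^ (p:ℕ) * y ^ s) := by rw [hyδ, hyp]; ring
      _ ≤ (Real.Gamma (y + s) * (y + s) ^ (1 - s)) * (y ^ (p:ℕ) * y ^ s) := by
          apply mul_le_mul_of_nonneg_right hB
          positivity
      _ ≤ (Real.Gamma (y + s) * (3 * y ^ (1 - s))) * (y ^ (p:ℕ) * y ^ s) := by
          apply mul_le_mul_of_nonneg_right _ (by positivity)
          exact mul_le_mul_of_nonneg_left h3 (le_of_lt hGspos)
      _ = (Real.Gamma (y + s) * y ^ (p:ℕ)) * (3 * (y ^ (1 - s) * y ^ s)) := by ring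
      _ ≤ Real.Gamma (y + δ) * (3 * (y ^ (1 - s) * y ^ s)) := by
          apply mul_le_mul_of_nonneg_right hA
          positivity
      _ = y * (3 * Real.Gamma (y + δ)) := by rw [hys]; ring
  exact le_of_mul_le_mul_left key hy0

lemma fact4 : ∀ m : ℕ, ((2 * m).factorial : ℝ) * Real.Gamma (1 / 2)
    = 4 ^ m * (m.factorial : ℝ) * Real.Gamma ((m : ℝ) + 1 / 2) := by
  intro m
  induction m with
  | zero => norm_num
  | succ m ih =>
    have hpos : ((m : ℝ) + 1 / 2) ≠ 0 := by positivity
    have hg : Real.Gamma (((m : ℕ) + 1 : ℝ) + 1 / 2) = ((m : ℝ) + 1 / 2) * Real.Gamma ((m : ℝ) + 1 / 2) := by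
      rw [show ((m : ℕ) + 1 : ℝ) + 1/2 = ((m : ℝ) + 1/2) + 1 by ring, Real.Gamma_add_one hpos]
    have hfac : ((2 * (m + 1)).factorial : ℝ)
        = ((2 * m + 2) * (2 * m + 1)) * ((2 * m).factorial : ℝ) := by
      have : 2 * (m + 1) = (2 * m + 1) + 1 := by ring
      rw [this, Nat.factorial_succ, Nat.factorial_succ]
      push_cast; ring
    have hfac1 : (((m + 1).factorial : ℕ) : ℝ) = ((m : ℝ) + 1) * (m.factorial : ℝ) := by
      rw [Nat.factorial_succ]; push_cast; ring
    rw [hfac, hfac1]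
    push_cast
    rw [hg]
    push_cast at ih
    linear_combination (2 * (m:ℝ) + 2) * (2 * (m:ℝ) + 1) * ih

lemma gamma_prod_peel (c : ℝ) : ∀ q : ℕ, 0 < c + 1 - q →
    Real.Gamma (c + 1) = (∏ i ∈ Finset.range q, (c - (i : ℝ))) * Real.Gamma (c + 1 - q) := by
  intro q
  induction q with
  | zero => simp
  | succ q ih =>
    intro hq
    have hq' : 0 < c + 1 - q := by
      push_cast at hq ⊢; linarith
    have hcq : c - q ≠ 0 := by
      push_cast at hq; intro h; rw [sub_eq_zero] at h; rw [h] at hq; linarith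
    have hg : Real.Gamma (c + 1 - q) = (c - q) * Real.Gamma (c - q) := by
      rw [show c + 1 - (q : ℝ) = (c - q) + 1 by ring, Real.Gamma_add_one hcq]
    rw [ih hq', hg, Finset.prod_range_succ]
    rw [show c + 1 - ((q : ℕ) + 1 : ℕ) = c - q by push_cast; ring]
    ring









set_option maxHeartbeats 1000000 in
lemma qf_interior (n k : ℕ) (hn : 4 ≤ n) (hk : 1 ≤ k) {x : ℝ} (hx : x ∈ Ioo (-1 : ℝ) 1) :
    |iteratedDeriv k (qf ((k : ℝ) + ((n : ℝ) - 3) / 2)) x|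
      ≤ 3 / Real.Gamma (1 / 2) * 2 ^ (((n : ℝ) - 2) / 2) * (k : ℝ) ^ (-(((n : ℝ) - 2) / 2))
        * (2 ^ k * Real.Gamma ((k : ℝ) + ((n : ℝ) - 3) / 2 + 1)) := by
  set α : ℝ := ((n : ℝ) - 3) / 2 with hαdef
  set δ : ℝ := ((n : ℝ) - 2) / 2 with hδdef
  set c : ℝ := (k : ℝ) + α with hcdef
  have hn4 : (4 : ℝ) ≤ (n : ℝ) := by exact_mod_cast hn
  have hk1 : (1 : ℝ) ≤ (k : ℝ) := by exact_mod_cast hk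
  have hα : 1 / 2 ≤ α := by rw [hαdef]; linarith
  have hδ1 : 1 ≤ δ := by rw [hδdef]; linarith
  have hδα : δ = α + 1 / 2 := by rw [hδdef, hαdef]; ring
  have hc1 : 1 ≤ c := by rw [hcdef]; linarith
  have hc2 : (k : ℝ) + 1 / 2 ≤ c := by rw [hcdef]; linarith
  have hG2 : 0 < Real.Gamma (1 / 2) := Real.Gamma_pos_of_pos (by norm_num)
  have hson := qf_sonine k hc1 hc2 hx
  -- the common Gamma-ratio bound; m will be specified per parity
  have key : ∀ m : ℕ, (k : ℝ) / 2 ≤ (m : ℝ) + 1 / 2 → 0 < (k : ℝ) →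
      Real.Gamma ((m : ℝ) + 1 / 2)
        ≤ 3 * (2 ^ δ * (k : ℝ) ^ (-δ)) * Real.Gamma ((m : ℝ) + 1 / 2 + δ) := by
    intro m hm hkpos
    have hy : (1 : ℝ) / 2 ≤ (m : ℝ) + 1 / 2 := by
      have : (0 : ℝ) ≤ (m : ℝ) := Nat.cast_nonneg m
      linarith
    have hypos : (0 : ℝ) < (m : ℝ) + 1 / 2 := by linarith
    have h1 := gamma_ratio hy hδ1
    have hGd : 0 < Real.Gamma ((m : ℝ) + 1 / 2 + δ) := Real.Gamma_pos_of_pos (by linarith)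
    have hrp : ((m : ℝ) + 1 / 2) ^ (-δ) ≤ 2 ^ δ * (k : ℝ) ^ (-δ) := by
      have hk2pos : (0 : ℝ) < (k : ℝ) / 2 := by linarith
      have e1 : ((m : ℝ) + 1 / 2) ^ (-δ) ≤ ((k : ℝ) / 2) ^ (-δ) := by
        rw [Real.rpow_neg (le_of_lt hypos), Real.rpow_neg (le_of_lt hk2pos)]
        have h2 : ((k : ℝ) / 2) ^ δ ≤ ((m : ℝ) + 1 / 2) ^ δ :=
          Real.rpow_le_rpow (le_of_lt hk2pos) hm (by linarith)
        exact inv_anti₀ (Real.rpow_pos_of_pos hk2pos δ) h2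
      have e2 : ((k : ℝ) / 2) ^ (-δ) = 2 ^ δ * (k : ℝ) ^ (-δ) := by
        rw [Real.rpow_neg (by positivity), Real.rpow_neg (by positivity),
          Real.div_rpow (le_of_lt hkpos) (by norm_num)]
        rw [inv_div]
        rw [div_eq_mul_inv]
      linarith [e1, e2.symm.le]
    have hpowpos : (0 : ℝ) < ((m : ℝ) + 1 / 2) ^ δ := Real.rpow_pos_of_pos hypos δ
    calc Real.Gamma ((m : ℝ) + 1 / 2)
        = (Real.Gamma ((m : ℝ) + 1 / 2) * ((m : ℝ) + 1 / 2) ^ δ) * ((m : ℝ) + 1 / 2) ^ (-δ) := by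
          rw [mul_assoc, ← Real.rpow_add hypos]
          simp
      _ ≤ (3 * Real.Gamma ((m : ℝ) + 1 / 2 + δ)) * ((m : ℝ) + 1 / 2) ^ (-δ) :=
          mul_le_mul_of_nonneg_right h1 (Real.rpow_nonneg (le_of_lt hypos) _)
      _ ≤ (3 * Real.Gamma ((m : ℝ) + 1 / 2 + δ)) * (2 ^ δ * (k : ℝ) ^ (-δ)) :=
          mul_le_mul_of_nonneg_left hrp (by positivity)
      _ = 3 * (2 ^ δ * (k : ℝ) ^ (-δ)) * Real.Gamma ((m : ℝ) + 1 / 2 + δ) := by ring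
  have hkpos : (0 : ℝ) < (k : ℝ) := by linarith
  rcases Nat.even_or_odd k with ⟨m, hm⟩ | ⟨m, hm⟩
  · -- even case : k = 2 * m, m ≥ 1
    have hk2 : k = 2 * m := by omega
    have hm1 : 1 ≤ m := by omega
    have hkR : (k : ℝ) = 2 * (m : ℝ) := by rw [hk2]; push_cast; ring
    have hmR1 : (1 : ℝ) ≤ (m : ℝ) := by exact_mod_cast hm1
    -- value of w at 0
    have hw0 : iteratedDeriv (k + 1) (qf c) 0 = 0 := by
      rw [show k + 1 = 2 * m + 1 by omega]; exact qf_odd0 hc1 m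
    have hv0 : iteratedDeriv k (qf c) 0
        = (-1) ^ m * (((2 * m).factorial : ℝ) / (m.factorial : ℝ))
          * ∏ i ∈ Finset.range m, (c - (i : ℝ)) := by
      rw [hk2]; exact qf_even0 hc1 m
    set P : ℝ := ∏ i ∈ Finset.range m, (c - (i : ℝ)) with hPdef
    have hPpos : 0 < P := by
      rw [hPdef]
      apply Finset.prod_pos
      intro i hi
      have : (i : ℝ) < (m : ℝ) := by exact_mod_cast Finset.mem_range.1 hi
      rw [hcdef, hkR]; linarith
    -- |v x| ≤ |v 0|
    have habs : |iteratedDeriv k (qf c) x| ≤ |iteratedDeriv k (qf c) 0| := by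
      rw [← Real.sqrt_sq_eq_abs, ← Real.sqrt_sq_eq_abs]
      apply Real.sqrt_le_sqrt
      rw [hw0] at hson
      simpa using hson
    have habs0 : |iteratedDeriv k (qf c) 0|
        = ((2 * m).factorial : ℝ) / (m.factorial : ℝ) * P := by
      rw [hv0, abs_mul, abs_mul, abs_pow, abs_neg, abs_one, one_pow, one_mul,
        abs_of_pos hPpos, abs_of_nonneg (by positivity)]
    -- Gamma split
    have hsplit : Real.Gamma (c + 1) = P * Real.Gamma ((m : ℝ) + 1 / 2 + δ) := by
      have h0 : 0 < c + 1 - (m : ℝ) := by rw [hcdef, hkR]; linarith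
      rw [gamma_prod_peel c m h0, ← hPdef,
        show c + 1 - (m : ℝ) = (m : ℝ) + 1 / 2 + δ by rw [hcdef, hkR, hδα]; ring]
    have h2k : (2 : ℝ) ^ k = 4 ^ m := by
      rw [hk2, pow_mul]; norm_num
    have hkey := key m (by rw [hkR]; linarith) hkpos
    have hGd : 0 < Real.Gamma ((m : ℝ) + 1 / 2 + δ) := Real.Gamma_pos_of_pos (by positivity)
    have e1 : ((2 * m).factorial : ℝ) / (m.factorial : ℝ)
        = 4 ^ m * Real.Gamma ((m : ℝ) + 1 / 2) / Real.Gamma (1 / 2) := by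
      have hmf : (0:ℝ) < ((m.factorial : ℕ) : ℝ) := by
        exact_mod_cast m.factorial_pos
      rw [div_eq_div_iff hmf.ne' hG2.ne']
      linear_combination fact4 m
    calc |iteratedDeriv k (qf c) x| ≤ |iteratedDeriv k (qf c) 0| := habs
      _ = ((2 * m).factorial : ℝ) / (m.factorial : ℝ) * P := habs0
      _ = 4 ^ m * Real.Gamma ((m : ℝ) + 1 / 2) / Real.Gamma (1 / 2) * P := by rw [e1]
      _ ≤ 4 ^ m * (3 * (2 ^ δ * (k : ℝ) ^ (-δ))
            * Real.Gamma ((m : ℝ) + 1 / 2 + δ)) / Real.Gamma (1 / 2) * P := by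
          gcongr
      _ = 3 / Real.Gamma (1 / 2) * 2 ^ δ * (k : ℝ) ^ (-δ)
            * (2 ^ k * Real.Gamma (c + 1)) := by
          rw [hsplit, h2k]; ring
  · -- odd case : k = 2 * m + 1
    have hkR : (k : ℝ) = 2 * (m : ℝ) + 1 := by rw [hm]; push_cast; ring
    have hv0 : iteratedDeriv k (qf c) 0 = 0 := by
      rw [hm]; exact qf_odd0 hc1 m
    have hw0 : iteratedDeriv (k + 1) (qf c) 0
        = (-1) ^ (m + 1) * (((2 * (m + 1)).factorial : ℝ) / ((m + 1).factorial : ℝ))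
          * ∏ i ∈ Finset.range (m + 1), (c - (i : ℝ)) := by
      rw [show k + 1 = 2 * (m + 1) by omega]; exact qf_even0 hc1 (m + 1)
    set P : ℝ := ∏ i ∈ Finset.range (m + 1), (c - (i : ℝ)) with hPdef
    have hPpos : 0 < P := by
      rw [hPdef]
      apply Finset.prod_pos
      intro i hi
      have : (i : ℝ) < (m : ℝ) + 1 := by exact_mod_cast Finset.mem_range.1 hi
      rw [hcdef, hkR]; linarith
    obtain ⟨W, hW⟩ : ∃ W, iteratedDeriv (k + 1) (qf c) 0 = W := ⟨_, rfl⟩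
    rw [hW] at hson hw0
    have habsw : |W| = ((2 * (m + 1)).factorial : ℝ) / ((m + 1).factorial : ℝ) * P := by
      rw [hw0, abs_mul, abs_mul, abs_pow, abs_neg, abs_one, one_pow, one_mul,
        abs_of_pos hPpos, abs_of_nonneg (by positivity)]
    have hlam : ((k : ℝ) + 1) ^ 2 ≤ ((k : ℝ) + 1) * (2 * c - (k : ℝ)) := by
      have : (k : ℝ) + 1 ≤ 2 * c - (k : ℝ) := by rw [hcdef]; linarith
      nlinarith [hkpos]
    have hk1pos : (0 : ℝ) < ((k : ℝ) + 1) ^ 2 := by positivity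
    have habs : |iteratedDeriv k (qf c) x| ≤ |W| / ((k : ℝ) + 1) := by
      rw [← Real.sqrt_sq_eq_abs]
      have h1 : (iteratedDeriv k (qf c) x) ^ 2 ≤ W ^ 2 / (((k : ℝ) + 1) * (2 * c - (k : ℝ))) := by
        rw [hv0] at hson; simpa using hson
      have h2 : W ^ 2 / (((k : ℝ) + 1) * (2 * c - (k : ℝ))) ≤ W ^ 2 / ((k : ℝ) + 1) ^ 2 :=
        div_le_div_of_nonneg_left (by positivity) hk1pos hlam
      have h3 : W ^ 2 / ((k : ℝ) + 1) ^ 2 = (|W| / ((k : ℝ) + 1)) ^ 2 := by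
        rw [div_pow, sq_abs]
      calc Real.sqrt ((iteratedDeriv k (qf c) x) ^ 2)
          ≤ Real.sqrt ((|W| / ((k : ℝ) + 1)) ^ 2) := by
            apply Real.sqrt_le_sqrt; rw [← h3]; linarith
        _ = |W| / ((k : ℝ) + 1) := Real.sqrt_sq (by positivity)
    have hsplit : Real.Gamma (c + 1) = P * Real.Gamma ((m : ℝ) + 1 / 2 + δ) := by
      have h0 : 0 < c + 1 - ((m + 1 : ℕ) : ℝ) := by
        push_cast
        rw [hcdef, hkR]; linarith
      rw [gamma_prod_peel c (m + 1) h0,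
        show c + 1 - ((m + 1 : ℕ) : ℝ) = (m : ℝ) + 1 / 2 + δ by
          push_cast; rw [hcdef, hkR, hδα]; ring]
    have h2k : (2 : ℝ) ^ k = 2 * 4 ^ m := by
      rw [hm, pow_succ, pow_mul]; norm_num; ring
    have hkey := key m (by rw [hkR]; linarith) hkpos
    have hGd : 0 < Real.Gamma ((m : ℝ) + 1 / 2 + δ) := Real.Gamma_pos_of_pos (by positivity)
    have hGm : 0 < Real.Gamma ((m : ℝ) + 1 / 2) := Real.Gamma_pos_of_pos (by positivity)
    have hmf : (0:ℝ) < ((m.factorial : ℕ) : ℝ) := by exact_mod_cast m.factorial_pos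
    have hfac2 : (((2 * (m + 1)).factorial : ℕ) : ℝ)
        = (2 * (m : ℝ) + 2) * (2 * (m : ℝ) + 1) * ((2 * m).factorial : ℝ) := by
      rw [show 2 * (m + 1) = (2 * m + 1) + 1 by ring, Nat.factorial_succ, Nat.factorial_succ]
      push_cast; ring
    have hfac1 : (((m + 1).factorial : ℕ) : ℝ) = ((m : ℝ) + 1) * (m.factorial : ℝ) := by
      rw [Nat.factorial_succ]; push_cast; ring
    have hq : ((2 * (m + 1)).factorial : ℝ) * Real.Gamma (1 / 2)
        = (2 * (m : ℝ) + 2) * (2 * (m : ℝ) + 1)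
          * (4 ^ m * (m.factorial : ℝ) * Real.Gamma ((m : ℝ) + 1 / 2)) := by
      rw [hfac2]
      linear_combination (2 * (m : ℝ) + 2) * (2 * (m : ℝ) + 1) * fact4 m
    have step2 : ((2 * (m + 1)).factorial : ℝ) / (((m + 1).factorial : ℝ) * ((k : ℝ) + 1))
        ≤ 2 * (4 ^ m) * Real.Gamma ((m : ℝ) + 1 / 2) / Real.Gamma (1 / 2) := by
      have hden : (0:ℝ) < ((m + 1).factorial : ℝ) * ((k : ℝ) + 1) := by
        have h5 : (0:ℝ) < (((m + 1).factorial : ℕ) : ℝ) := by exact_mod_cast (m + 1).factorial_pos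
        exact mul_pos h5 (by linarith)
      rw [div_le_div_iff₀ hden hG2]
      rw [hfac1, hkR, hq]
      have h4m : (0:ℝ) < (4:ℝ) ^ m := by positivity
      have hmn : (0:ℝ) ≤ (m:ℝ) := Nat.cast_nonneg m
      nlinarith [mul_pos (mul_pos h4m hmf) hGm]
    calc |iteratedDeriv k (qf c) x| ≤ |W| / ((k : ℝ) + 1) := habs
      _ = ((2 * (m + 1)).factorial : ℝ) / (((m + 1).factorial : ℝ) * ((k : ℝ) + 1)) * P := by
          rw [habsw, ← div_div]; ring
      _ ≤ 2 * (4 ^ m) * Real.Gamma ((m : ℝ) + 1 / 2) / Real.Gamma (1 / 2) * P :=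
          mul_le_mul_of_nonneg_right step2 (le_of_lt hPpos)
      _ ≤ 2 * (4 ^ m) * (3 * (2 ^ δ * (k : ℝ) ^ (-δ))
            * Real.Gamma ((m : ℝ) + 1 / 2 + δ)) / Real.Gamma (1 / 2) * P := by
          gcongr
      _ = 3 / Real.Gamma (1 / 2) * 2 ^ δ * (k : ℝ) ^ (-δ)
            * (2 ^ k * Real.Gamma (c + 1)) := by
          rw [hsplit, h2k]; ring




lemma qf_cont {c : ℝ} {k : ℕ} (h : (k : ℝ) ≤ c) : Continuous (iteratedDeriv k (qf c)) := by
  have h1 : ContDiff ℝ k (fun u : ℝ => u ^ c) := Real.contDiff_rpow_const_of_le h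
  have h2 : ContDiff ℝ k (fun y : ℝ => 1 - y ^ 2) := contDiff_const.sub (contDiff_id.pow 2)
  have h3 : ContDiff ℝ k (qf c) := h1.comp h2
  exact h3.continuous_iteratedDeriv k (le_refl _)

/-- **Uniform bound for `Q_k`, dimension `n ≥ 4`.**
Let `n ≥ 4` and `Q_k(x) = ∂_x^k((1-x²)^{k+(n-3)/2}) / (2^k Γ(k+(n-1)/2))` for `k ≥ 1`.
Then there is a constant `C` (independent of `k` and `x`) with
`|Q_k(x)| ≤ C k^{1-n/2}` for all `x ∈ [-1,1]`. -/
theorem Qk_bound_dim_ge_four (n : ℕ) (hn : 4 ≤ n) :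
    ∃ C > 0, ∀ (k : ℕ), 1 ≤ k → ∀ x ∈ Icc (-1 : ℝ) 1,
      |iteratedDeriv k (fun y : ℝ => (1 - y ^ 2) ^ ((k : ℝ) + ((n : ℝ) - 3) / 2)) x /
          (2 ^ k * Real.Gamma ((k : ℝ) + ((n : ℝ) - 1) / 2))|
        ≤ C * (k : ℝ) ^ (1 - (n : ℝ) / 2) := by
  have hG2 : 0 < Real.Gamma (1 / 2) := Real.Gamma_pos_of_pos (by norm_num)
  refine ⟨3 / Real.Gamma (1 / 2) * 2 ^ (((n : ℝ) - 2) / 2), by positivity, ?_⟩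
  intro k hk x hx
  set c : ℝ := (k : ℝ) + ((n : ℝ) - 3) / 2 with hcdef
  have hn4 : (4 : ℝ) ≤ (n : ℝ) := by exact_mod_cast hn
  have hk1 : (1 : ℝ) ≤ (k : ℝ) := by exact_mod_cast hk
  have hkc : (k : ℝ) ≤ c := by rw [hcdef]; linarith
  have hcpos : 0 < c + 1 := by linarith
  have hΓpos : 0 < Real.Gamma (c + 1) := Real.Gamma_pos_of_pos hcpos
  have hden : (0 : ℝ) < 2 ^ k * Real.Gamma (c + 1) := by positivity
  set M : ℝ := 3 / Real.Gamma (1 / 2) * 2 ^ (((n : ℝ) - 2) / 2) * (k : ℝ) ^ (-(((n : ℝ) - 2) / 2))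
      * (2 ^ k * Real.Gamma (c + 1)) with hMdef
  -- the numerator bound on the closed interval by continuity
  have hclosed : IsClosed {y : ℝ | |iteratedDeriv k (qf c) y| ≤ M} :=
    isClosed_le ((qf_cont hkc).abs) continuous_const
  have hsub : Ioo (-1 : ℝ) 1 ⊆ {y : ℝ | |iteratedDeriv k (qf c) y| ≤ M} := by
    intro y hy
    exact qf_interior n k hn hk hy
  have hIcc : Icc (-1 : ℝ) 1 ⊆ {y : ℝ | |iteratedDeriv k (qf c) y| ≤ M} := by
    rw [← closure_Ioo (by norm_num : (-1 : ℝ) ≠ 1)]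
    exact closure_minimal hsub hclosed
  have hnum : |iteratedDeriv k (qf c) x| ≤ M := hIcc hx
  -- rewrite the goal
  have hΓeq : Real.Gamma ((k : ℝ) + ((n : ℝ) - 1) / 2) = Real.Gamma (c + 1) := by
    congr 1
    rw [hcdef]; ring
  have hexp : (1 : ℝ) - (n : ℝ) / 2 = -(((n : ℝ) - 2) / 2) := by ring
  have hfun : (fun y : ℝ => (1 - y ^ 2) ^ ((k : ℝ) + ((n : ℝ) - 3) / 2)) = qf c := rfl
  rw [hfun, hΓeq, hexp, abs_div, abs_of_pos hden, div_le_iff₀ hden]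
  calc |iteratedDeriv k (qf c) x| ≤ M := hnum
    _ = 3 / Real.Gamma (1 / 2) * 2 ^ (((n : ℝ) - 2) / 2) * (k : ℝ) ^ (-(((n : ℝ) - 2) / 2))
        * (2 ^ k * Real.Gamma (c + 1)) := hMdef
    _ = 3 / Real.Gamma (1 / 2) * 2 ^ (((n : ℝ) - 2) / 2) * (k : ℝ) ^ (-(((n : ℝ) - 2) / 2))
        * (2 ^ k * Real.Gamma (c + 1)) := by ring
end
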